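/- For every point x of the upper half-space ℍⁿ and every 0 < r < 1, the ball inclusions B_ρ(x, log((2+r)/(2−r))) ⊆ B_c̃(x, r) ⊆ B_ρ(x, log((1+r)/(1−r))) hold; equivalently, {y ∈ ℍⁿ : |x−y|/√(|x−y|² + 4·xₙ·yₙ) < r/2} ⊆ {y ∈ ℍⁿ : c̃_{ℍⁿ}(x,y) < r} ⊆ {y ∈ ℍⁿ : |x−y|/√(|x−y|² + 4·xₙ·yₙ) < r}. -/

import Mathlib

open Metric Set

/-- The upper half-space `ℍⁿ = {x ∈ ℝⁿ : xₙ > 0}` (dimension `n + 1 ≥ 1`). -/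
def upperHalfSpace (n : ℕ) : Set (EuclideanSpace ℝ (Fin (n + 1))) :=
  {x | 0 < x (Fin.last n)}

/-- Its boundary `∂ℍⁿ = {x ∈ ℝⁿ : xₙ = 0}`. -/
def upperHalfSpaceBdry (n : ℕ) : Set (EuclideanSpace ℝ (Fin (n + 1))) :=
  {x | x (Fin.last n) = 0}

/-- The new hyperbolic type metric on the upper half-space:
`c̃_{ℍⁿ}(x,y) = |x−y| / inf_{z∈∂ℍⁿ} max{|x−z|, |y−z|}`. -/
noncomputable def ctildeH {n : ℕ} (x y : EuclideanSpace ℝ (Fin (n + 1))) : ℝ :=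
  dist x y / sInf ((fun z => max (dist x z) (dist y z)) '' upperHalfSpaceBdry n)

/-- `th(ρ_{ℍⁿ}(x,y)/2) = |x−y| / √(|x−y|² + 4 xₙ yₙ)` for the hyperbolic metric of `ℍⁿ`;
note `ρ_{ℍⁿ}(x,y) < log((2+r)/(2−r)) ↔ th(ρ_{ℍⁿ}(x,y)/2) < r/2` and
`ρ_{ℍⁿ}(x,y) < log((1+r)/(1−r)) ↔ th(ρ_{ℍⁿ}(x,y)/2) < r`. -/
noncomputable def thRhoH {n : ℕ} (x y : EuclideanSpace ℝ (Fin (n + 1))) : ℝ :=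
  dist x y / Real.sqrt (dist x y ^ 2 + 4 * x (Fin.last n) * y (Fin.last n))

section Aux
variable {n : ℕ}

private lemma dist_sq_eq (x y : EuclideanSpace ℝ (Fin (n + 1))) :
    dist x y ^ 2 = ∑ i, (x i - y i) ^ 2 := by
  rw [EuclideanSpace.dist_eq, Real.sq_sqrt (by positivity)]
  simp [Real.dist_eq, sq_abs]

/-- reflection across the boundary -/
private def reflB (x : EuclideanSpace ℝ (Fin (n + 1))) : EuclideanSpace ℝ (Fin (n + 1)) :=
  WithLp.toLp 2 (fun i => if i = Fin.last n then -(x i) else x i)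

private lemma refl_sq (x y : EuclideanSpace ℝ (Fin (n + 1))) :
    dist (reflB x) y ^ 2 = dist x y ^ 2 + 4 * x (Fin.last n) * y (Fin.last n) := by
  rw [dist_sq_eq, dist_sq_eq, Fin.sum_univ_castSucc, Fin.sum_univ_castSucc]
  simp only [reflB]
  have h : ∀ (c d : ℝ) (i : Fin n), (if i.castSucc = Fin.last n then c else d) = d :=
    fun c d i => if_neg (Fin.castSucc_lt_last i).ne
  simp [h]
  ring

private lemma refl_dist (x z : EuclideanSpace ℝ (Fin (n + 1))) (hz : z (Fin.last n) = 0) :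
    dist (reflB x) z = dist x z := by
  rw [EuclideanSpace.dist_eq, EuclideanSpace.dist_eq]
  congr 1
  rw [Fin.sum_univ_castSucc, Fin.sum_univ_castSucc]
  simp only [reflB]
  have h : ∀ (c d : ℝ) (i : Fin n), (if i.castSucc = Fin.last n then c else d) = d :=
    fun c d i => if_neg (Fin.castSucc_lt_last i).ne
  simp [h, hz, Real.dist_eq]

end Aux

/-- For all `x ∈ ℍⁿ` and `0 < r < 1`:
`B_ρ(x, log((2+r)/(2−r))) ⊆ B_c̃(x, r) ⊆ B_ρ(x, log((1+r)/(1−r)))`, i.e.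
`{y ∈ ℍⁿ : th(ρ(x,y)/2) < r/2} ⊆ {y ∈ ℍⁿ : c̃(x,y) < r} ⊆ {y ∈ ℍⁿ : th(ρ(x,y)/2) < r}`. -/
theorem stmt_14 {n : ℕ} (x : EuclideanSpace ℝ (Fin (n + 1)))
    (hx : x ∈ upperHalfSpace n) (r : ℝ) (hr : r ∈ Ioo (0 : ℝ) 1) :
    {y | y ∈ upperHalfSpace n ∧ thRhoH x y < r / 2} ⊆
      {y | y ∈ upperHalfSpace n ∧ ctildeH x y < r} ∧
    {y | y ∈ upperHalfSpace n ∧ ctildeH x y < r} ⊆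
      {y | y ∈ upperHalfSpace n ∧ thRhoH x y < r} := by
  obtain ⟨hr0, hr1⟩ := hr
  have ha : 0 < x (Fin.last n) := hx
  -- main estimates, for each y in the half-space
  have key : ∀ y : EuclideanSpace ℝ (Fin (n + 1)), y ∈ upperHalfSpace n →
      let S := Real.sqrt (dist x y ^ 2 + 4 * x (Fin.last n) * y (Fin.last n))
      let m := sInf ((fun z => max (dist x z) (dist y z)) '' upperHalfSpaceBdry n)
      0 < S ∧ S / 2 ≤ m ∧ m ≤ S := by
    intro y hb
    have hb' : 0 < y (Fin.last n) := hb
    set a := x (Fin.last n) with hadef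
    set b := y (Fin.last n) with hbdef
    set s := dist x y with hsdef
    have hT : 0 < s ^ 2 + 4 * a * b := by positivity
    set S := Real.sqrt (s ^ 2 + 4 * a * b) with hSdef
    have hS : 0 < S := Real.sqrt_pos.mpr hT
    -- the projection point
    set z₀ : EuclideanSpace ℝ (Fin (n + 1)) :=
      WithLp.toLp 2 (fun i => if i = Fin.last n then 0 else x i) with hz₀def
    have hz₀ : z₀ ∈ upperHalfSpaceBdry n := by simp [upperHalfSpaceBdry, hz₀def]
    have hmem : max (dist x z₀) (dist y z₀) ∈
        ((fun z => max (dist x z) (dist y z)) '' upperHalfSpaceBdry n) := ⟨z₀, hz₀, rfl⟩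
    have hne : ((fun z => max (dist x z) (dist y z)) '' upperHalfSpaceBdry n).Nonempty :=
      ⟨_, hmem⟩
    have hbdd : BddBelow ((fun z => max (dist x z) (dist y z)) '' upperHalfSpaceBdry n) := by
      refine ⟨0, ?_⟩
      rintro w ⟨z, hz, rfl⟩
      exact le_trans dist_nonneg (le_max_left _ _)
    -- lower bound via reflection
    have hlow : ∀ w ∈ ((fun z => max (dist x z) (dist y z)) '' upperHalfSpaceBdry n),
        S / 2 ≤ w := by
      rintro w ⟨z, hz, rfl⟩
      have h1 : dist (reflB x) y = S := by
        rw [show dist (reflB x) y = Real.sqrt (dist (reflB x) y ^ 2) from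
          (Real.sqrt_sq dist_nonneg).symm, refl_sq]
      have h2 : dist (reflB x) z = dist x z := refl_dist x z hz
      have h3 : dist (reflB x) y ≤ dist (reflB x) z + dist z y := dist_triangle _ _ _
      have h4 : dist z y = dist y z := dist_comm _ _
      have h5 : dist x z ≤ max (dist x z) (dist y z) := le_max_left _ _
      have h6 : dist y z ≤ max (dist x z) (dist y z) := le_max_right _ _
      linarith
    have hm_lb : S / 2 ≤ sInf ((fun z => max (dist x z) (dist y z)) '' upperHalfSpaceBdry n) :=
      le_csInf hne hlow
    -- upper bound via the projection point
    have hsq : s ^ 2 = (∑ i : Fin n, (x i.castSucc - y i.castSucc) ^ 2) + (a - b) ^ 2 := by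
      rw [hsdef, dist_sq_eq, Fin.sum_univ_castSucc]
    have hd1 : dist x z₀ ^ 2 = a ^ 2 := by
      rw [dist_sq_eq, Fin.sum_univ_castSucc]
      simp only [hz₀def]
      have h : ∀ (c d : ℝ) (i : Fin n), (if i.castSucc = Fin.last n then c else d) = d :=
        fun c d i => if_neg (Fin.castSucc_lt_last i).ne
      simp [hz₀def, h, hadef]
    have hd2 : dist y z₀ ^ 2 = (∑ i : Fin n, (y i.castSucc - x i.castSucc) ^ 2) + b ^ 2 := by
      rw [dist_sq_eq, Fin.sum_univ_castSucc]
      simp only [hz₀def]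
      have h : ∀ (c d : ℝ) (i : Fin n), (if i.castSucc = Fin.last n then c else d) = d :=
        fun c d i => if_neg (Fin.castSucc_lt_last i).ne
      simp [hz₀def, h, hbdef]
    have hsum : (∑ i : Fin n, (y i.castSucc - x i.castSucc) ^ 2)
        = ∑ i : Fin n, (x i.castSucc - y i.castSucc) ^ 2 := by
      apply Finset.sum_congr rfl; intro i _; ring
    have hd1' : dist x z₀ ^ 2 ≤ s ^ 2 + 4 * a * b := by
      have hnn : 0 ≤ ∑ i : Fin n, (x i.castSucc - y i.castSucc) ^ 2 := by positivity
      nlinarith [hd1, hsq, sq_nonneg (a + b), hb'.le, ha.le]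
    have hd2' : dist y z₀ ^ 2 ≤ s ^ 2 + 4 * a * b := by
      rw [hd2, hsum]
      nlinarith [sq_nonneg (a + b), hb'.le, ha.le]
    have hle : ∀ d : ℝ, 0 ≤ d → d ^ 2 ≤ s ^ 2 + 4 * a * b → d ≤ S := by
      intro d hd hd2
      calc d = Real.sqrt (d ^ 2) := (Real.sqrt_sq hd).symm
        _ ≤ S := Real.sqrt_le_sqrt hd2
    have hm_ub : sInf ((fun z => max (dist x z) (dist y z)) '' upperHalfSpaceBdry n) ≤ S := by
      refine le_trans (csInf_le hbdd hmem) ?_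
      exact max_le (hle _ dist_nonneg hd1') (hle _ dist_nonneg hd2')
    exact ⟨hS, hm_lb, hm_ub⟩
  constructor
  · rintro y ⟨hy, hth⟩
    obtain ⟨hS, hm_lb, hm_ub⟩ := key y hy
    refine ⟨hy, ?_⟩
    set S := Real.sqrt (dist x y ^ 2 + 4 * x (Fin.last n) * y (Fin.last n)) with hSdef
    set m := sInf ((fun z => max (dist x z) (dist y z)) '' upperHalfSpaceBdry n) with hmdef
    have hm : 0 < m := lt_of_lt_of_le (by linarith) hm_lb
    have h1 : ctildeH x y = dist x y / m := rfl
    have h2 : thRhoH x y = dist x y / S := rfl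
    rw [h1]
    have h3 : dist x y / m ≤ dist x y / (S / 2) :=
      div_le_div_of_nonneg_left dist_nonneg (by linarith) hm_lb
    have h4 : dist x y / (S / 2) = 2 * (dist x y / S) := by
      field_simp
    rw [h2] at hth
    linarith
  · rintro y ⟨hy, hct⟩
    obtain ⟨hS, hm_lb, hm_ub⟩ := key y hy
    refine ⟨hy, ?_⟩
    set S := Real.sqrt (dist x y ^ 2 + 4 * x (Fin.last n) * y (Fin.last n)) with hSdef
    set m := sInf ((fun z => max (dist x z) (dist y z)) '' upperHalfSpaceBdry n) with hmdef
    have hm : 0 < m := lt_of_lt_of_le (by linarith) hm_lb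
    have h1 : ctildeH x y = dist x y / m := rfl
    have h2 : thRhoH x y = dist x y / S := rfl
    rw [h2]
    have h3 : dist x y / S ≤ dist x y / m :=
      div_le_div_of_nonneg_left dist_nonneg hm hm_ub
    rw [h1] at hct
    linarith
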